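/- If the columns of V ∈ ℝ^{n×r} form a Chebyshev system (every r rows are linearly independent) and a ∉ range(V), then every characteristic set contains at least r+1 indices. -/
import Mathlib


/-- For a Chebyshev system, every characteristic set contains at least `r+1` indices. -/
theorem stmt_7 (n r : ℕ) (hn : r < n) (V : Matrix (Fin n) (Fin r) ℝ) (a : Fin n → ℝ)
    (hcheb : ∀ f : Fin r → Fin n, Function.Injective f →
      (Matrix.of fun k i => V (f k) i).det ≠ 0)
    (ha : a ∉ Set.range V.mulVec) :
    ∀ S : Finset (Fin n),
      ((⨅ u : Fin r → ℝ, ⨆ j ∈ S, |a j - ∑ i, u i * V j i|) =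
          (⨅ u : Fin r → ℝ, ⨆ j, |a j - ∑ i, u i * V j i|) ∧
        ∀ T : Finset (Fin n), T ⊂ S →
          (⨅ u : Fin r → ℝ, ⨆ j ∈ T, |a j - ∑ i, u i * V j i|) <
            (⨅ u : Fin r → ℝ, ⨆ j, |a j - ∑ i, u i * V j i|)) →
      r + 1 ≤ S.card := by
  intro S hS
  by_contra hcard
  push_neg at hcard
  have hSr : S.card ≤ r := Nat.lt_succ_iff.mp hcard
  -- extend S to a set S' of size r
  obtain ⟨S', hSS', -, hScard⟩ :=
    Finset.exists_subsuperset_card_eq (Finset.subset_univ S) hSr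
      (by simpa using hn.le)
  -- the injective selection of r rows
  set f : Fin r → Fin n := fun k => ((S'.orderIsoOfFin hScard) k : Fin n) with hf
  have hfinj : Function.Injective f := fun x y hxy => by
    exact (S'.orderIsoOfFin hScard).injective (Subtype.ext hxy)
  set M : Matrix (Fin r) (Fin r) ℝ := Matrix.of fun k i => V (f k) i with hM
  have hdet : IsUnit M.det := isUnit_iff_ne_zero.mpr (hcheb f hfinj)
  set u : Fin r → ℝ := M⁻¹.mulVec (a ∘ f) with hu
  have hMu : M.mulVec u = a ∘ f := by
    rw [hu, Matrix.mulVec_mulVec, Matrix.mul_nonsing_inv _ hdet, Matrix.one_mulVec]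
  -- u interpolates a on S
  have key : ∀ j ∈ S, ∑ i, u i * V j i = a j := by
    intro j hj
    have hjS' : j ∈ S' := hSS' hj
    obtain ⟨k, hk⟩ : ∃ k, f k = j :=
      ⟨(S'.orderIsoOfFin hScard).symm ⟨j, hjS'⟩,
        congrArg Subtype.val ((S'.orderIsoOfFin hScard).apply_symm_apply ⟨j, hjS'⟩)⟩
    have := congrFun hMu k
    simp only [Matrix.mulVec, dotProduct, Function.comp_apply, hM, Matrix.of_apply] at this
    rw [← hk]
    calc ∑ i, u i * V (f k) i = ∑ i, V (f k) i * u i := by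
          exact Finset.sum_congr rfl fun i _ => mul_comm _ _
      _ = a (f k) := this
  -- the sup over S at u is 0
  have hsup : (⨆ j ∈ S, |a j - ∑ i, u i * V j i|) = 0 := by
    have hterm : ∀ j : Fin n, (⨆ _ : j ∈ S, |a j - ∑ i, u i * V j i|) = 0 := by
      intro j
      by_cases hj : j ∈ S
      · have hz : |a j - ∑ i, u i * V j i| = 0 := by
          rw [key j hj]; simp
        haveI : Nonempty (j ∈ S) := ⟨hj⟩
        rw [hz]; exact ciSup_const
      · haveI : IsEmpty (j ∈ S) := ⟨fun h => hj h⟩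
        exact Real.iSup_of_isEmpty _
    simp_rw [hterm]
    haveI : Nonempty (Fin n) := ⟨⟨0, Nat.lt_of_le_of_lt (Nat.zero_le r) hn⟩⟩
    exact ciSup_const
  -- hence μ(S) = 0
  have hnonneg : ∀ w : Fin r → ℝ, 0 ≤ ⨆ j ∈ S, |a j - ∑ i, w i * V j i| :=
    fun w => Real.iSup_nonneg fun j => Real.iSup_nonneg fun _ => abs_nonneg _
  have hmuS : (⨅ w : Fin r → ℝ, ⨆ j ∈ S, |a j - ∑ i, w i * V j i|) = 0 := by
    refine le_antisymm ?_ (Real.iInf_nonneg hnonneg)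
    refine ciInf_le_of_le ⟨0, ?_⟩ u (le_of_eq hsup)
    rintro x ⟨w, rfl⟩
    exact hnonneg w
  have hmufull : (⨅ w : Fin r → ℝ, ⨆ j, |a j - ∑ i, w i * V j i|) = 0 := by
    rw [← hS.1, hmuS]
  -- so a is in the closure of the range of V.mulVec
  have hcl : a ∈ closure (Set.range V.mulVec) := by
    rw [Metric.mem_closure_iff]
    intro ε hε
    have h0 : (⨅ w : Fin r → ℝ, ⨆ j, |a j - ∑ i, w i * V j i|) < ε := by
      rw [hmufull]; exact hε
    obtain ⟨w, hw⟩ := exists_lt_of_ciInf_lt h0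
    refine ⟨V.mulVec w, ⟨w, rfl⟩, ?_⟩
    rw [dist_pi_lt_iff hε]
    intro j
    rw [Real.dist_eq]
    have h1 : |a j - V.mulVec w j| = |a j - ∑ i, w i * V j i| := by
      simp [Matrix.mulVec, dotProduct, mul_comm]
    rw [h1]
    exact lt_of_le_of_lt
      (le_ciSup (f := fun j => |a j - ∑ i, w i * V j i|) (Set.Finite.bddAbove (Set.finite_range _)) j) hw
  have hclosed : IsClosed (Set.range V.mulVec) := by
    have heq : Set.range V.mulVec = (LinearMap.range V.mulVecLin : Set (Fin n → ℝ)) := by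
      ext x
      simp [LinearMap.mem_range]
    rw [heq]
    exact Submodule.closed_of_finiteDimensional _
  exact ha (hclosed.closure_eq ▸ hcl)
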